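/- Let i, o be natural numbers and let S_{i,o} be the oriented star with centre x, i leaves each with an arc into x, and o leaves each with an arc out of x. Then for every natural number k ≥ 1, f_o(S_{i,o}, k) = k · f(K_{i,o}, k-1), where f(K_{i,o}, m) is the number of proper m-colourings of the complete bipartite graph with parts of sizes i and o. -/

import Mathlib

/-- An oriented colouring of an oriented graph. -/
def OColoring {V : Type*} (A : V → V → Prop) {k : ℕ} (c : V → Fin k) : Prop :=
  (∀ u v, A u v → c u ≠ c v) ∧
  (∀ u v x y, A u v → A x y → c u = c y → c v ≠ c x)

/-- The number of oriented `k`-colourings of the oriented graph `G = (V, A)`. -/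
noncomputable def foO {V : Type*} (A : V → V → Prop) (k : ℕ) : ℕ :=
  Nat.card {c : V → Fin k // OColoring A c}

/-- The number of proper `m`-colourings of the simple graph with adjacency relation `adj`. -/
noncomputable def properCount {V : Type*} (adj : V → V → Prop) (m : ℕ) : ℕ :=
  Nat.card {c : V → Fin m // ∀ u v, adj u v → c u ≠ c v}

/-- Arc relation of the oriented star `S_{i,o}`: centre `none`, with `i` in-leaves
`some (Sum.inl j)` and `o` out-leaves `some (Sum.inr j)`. -/
def starArc (i o : ℕ) (u v : Option (Fin i ⊕ Fin o)) : Prop :=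
  (∃ j : Fin i, u = some (Sum.inl j) ∧ v = none) ∨
  (∃ j : Fin o, u = none ∧ v = some (Sum.inr j))

/-- Adjacency relation of the complete bipartite graph `K_{i,o}`. -/
def kioAdj (i o : ℕ) (u v : Fin i ⊕ Fin o) : Prop :=
  (∃ (a : Fin i) (b : Fin o), u = Sum.inl a ∧ v = Sum.inr b) ∨
  (∃ (a : Fin o) (b : Fin i), u = Sum.inr a ∧ v = Sum.inl b)

lemma ocol_iff (i o k : ℕ) (c : Option (Fin i ⊕ Fin o) → Fin k) :
    OColoring (starArc i o) c ↔
      (∀ s, c (some s) ≠ c none) ∧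
      (∀ u v, kioAdj i o u v → c (some u) ≠ c (some v)) := by
  constructor
  · rintro ⟨h1, h2⟩
    constructor
    · rintro (j | j)
      · exact h1 _ _ (Or.inl ⟨j, rfl, rfl⟩)
      · exact (h1 _ _ (Or.inr ⟨j, rfl, rfl⟩)).symm
    · rintro u v (⟨a, b, rfl, rfl⟩ | ⟨a, b, rfl, rfl⟩)
      · intro h
        exact h2 _ _ _ _ (Or.inl ⟨a, rfl, rfl⟩) (Or.inr ⟨b, rfl, rfl⟩) h rfl
      · exact h2 _ _ _ _ (Or.inr ⟨a, rfl, rfl⟩) (Or.inl ⟨b, rfl, rfl⟩) rfl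
  · rintro ⟨h1, h2⟩
    constructor
    · rintro u v (⟨j, rfl, rfl⟩ | ⟨j, rfl, rfl⟩)
      · exact h1 _
      · exact (h1 _).symm
    · rintro u v x y (⟨j, rfl, rfl⟩ | ⟨j, rfl, rfl⟩) (⟨j', rfl, rfl⟩ | ⟨j', rfl, rfl⟩) h
      · exact absurd h (h1 _)
      · exact absurd h (h2 _ _ (Or.inl ⟨j, j', rfl, rfl⟩))
      · exact h2 _ _ (Or.inr ⟨j, j', rfl, rfl⟩)
      · exact absurd h.symm (h1 _)

theorem stmt_10 (i o : ℕ) :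
    ∀ k : ℕ, 1 ≤ k →
      foO (starArc i o) k = k * properCount (kioAdj i o) (k - 1) := by
  rintro k hk
  obtain ⟨n, rfl⟩ : ∃ n, k = n + 1 := ⟨k - 1, (Nat.succ_pred_eq_of_pos hk).symm⟩
  have E : {c : Option (Fin i ⊕ Fin o) → Fin (n+1) // OColoring (starArc i o) c} ≃
      Fin (n+1) × {g : (Fin i ⊕ Fin o) → Fin n // ∀ u v, kioAdj i o u v → g u ≠ g v} := by
    refine
      { toFun := fun c =>
          ⟨c.1 none, fun s =>
            (finSuccAboveEquiv (c.1 none)).symm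
              ⟨c.1 (some s), ((ocol_iff i o _ c.1).1 c.2).1 s⟩, ?_⟩,
        invFun := fun pg =>
          ⟨fun x => x.elim pg.1 (fun s => (finSuccAboveEquiv pg.1 (pg.2.1 s)).1), ?_⟩,
        left_inv := ?_, right_inv := ?_ }
    · intro u v huv hne
      have h2 := ((ocol_iff i o _ c.1).1 c.2).2 u v huv
      apply h2
      have := congrArg (fun z => ((finSuccAboveEquiv (c.1 none)) z).1) hne
      simpa using this
    · rcases pg with ⟨p, g, hg⟩
      rw [ocol_iff]
      refine ⟨fun s => (finSuccAboveEquiv p (g s)).2, fun u v huv h => ?_⟩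
      exact hg u v huv (Equiv.injective _ (Subtype.ext h))
    · rintro ⟨c, hc⟩
      ext x
      cases x with
      | none => rfl
      | some s => simp
    · rintro ⟨p, g, hg⟩
      refine Prod.ext rfl ?_
      ext s
      simp
      exact congrArg Fin.val ((finSuccAboveEquiv p).symm_apply_apply (g s))
  rw [foO, properCount, Nat.card_eq_of_bijective E E.bijective, Nat.card_prod,
    Nat.card_eq_fintype_card, Fintype.card_fin, Nat.add_sub_cancel]
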